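/- Let D ⊂ R^d be compact and Y a centered Gaussian process with continuous covariance k on D. Let (x_{ni}) be a triangular array dense in D in the sense that δ_n := sup_{x∈D} min_{i≤n} ||x_{ni} - x|| → 0. Then the one-nearest-neighbor Kriging predictor satisfies sup_{x∈D} E[(Y(x) - M^{nn}_n(x))^2] → 0, where M^{nn}_n(x) = [k(x_n*(x), x_n*(x)) > 0] · k(x, x_n*(x)) k(x_n*(x), x_n*(x))^{-1} Y(x_n*(x)) with x_n*(x) a nearest design point to x. -/

import Mathlib

open MeasureTheory Filter

lemma aux_integrable_mul {Ω : Type*} [MeasurableSpace Ω] {μ : Measure Ω} {f g : Ω → ℝ}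
    (hf : MemLp f 2 μ) (hg : MemLp g 2 μ) : Integrable (fun ω => f ω * g ω) μ := by
  have h1 := (hf.add hg).integrable_sq
  have h2 := hf.integrable_sq
  have h3 := hg.integrable_sq
  have heq : (fun ω => f ω * g ω)
      = fun ω => (((f + g) ω) ^ 2 - (f ω) ^ 2 - (g ω) ^ 2) / 2 := by
    funext ω; simp [Pi.add_apply]; ring
  rw [heq]
  exact ((h1.sub h2).sub h3).div_const 2

lemma aux_expand {Ω : Type*} [MeasurableSpace Ω] {μ : Measure Ω} {f g : Ω → ℝ}
    (hf : MemLp f 2 μ) (hg : MemLp g 2 μ) (a : ℝ) :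
    ∫ ω, (f ω - a * g ω) ^ 2 ∂μ
      = (∫ ω, f ω * f ω ∂μ) - 2 * a * (∫ ω, f ω * g ω ∂μ)
        + a ^ 2 * ∫ ω, g ω * g ω ∂μ := by
  have hff := aux_integrable_mul hf hf
  have hfg := aux_integrable_mul hf hg
  have hgg := aux_integrable_mul hg hg
  have heq : (fun ω => (f ω - a * g ω) ^ 2)
      = fun ω => (f ω * f ω - 2 * a * (f ω * g ω)) + a ^ 2 * (g ω * g ω) := by
    funext ω; ring
  have hI1 : Integrable (fun ω => f ω * f ω - 2 * a * (f ω * g ω)) μ :=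
    hff.sub (hfg.const_mul _)
  have hI2 : Integrable (fun ω => a ^ 2 * (g ω * g ω)) μ := hgg.const_mul _
  rw [heq, integral_add hI1 hI2, integral_sub hff (hfg.const_mul _),
    integral_const_mul, integral_const_mul]

/-- Uniform consistency of the one-nearest-neighbor Kriging predictor: for a centered
second-order process `Y` on a compact `D ⊆ ℝ^d` with continuous covariance `k` and a
triangular array of design points that is uniformly dense in `D`, the predictor
`M^{nn}_n(x) = 1_{k(t,t) > 0} (k(x,t)/k(t,t)) Y(t)`, `t = x_n*(x)` a nearest design point
to `x`, satisfies `sup_{x ∈ D} E[(Y(x) - M^{nn}_n(x))²] → 0`. -/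
theorem stmt_9 {d : ℕ} {Ω : Type*} [MeasurableSpace Ω]
    (μ : Measure Ω) [IsProbabilityMeasure μ]
    (D : Set (EuclideanSpace ℝ (Fin d))) (hDc : IsCompact D) (hDne : D.Nonempty)
    (Y : D → Ω → ℝ) (hYL2 : ∀ x, MemLp (Y x) 2 μ) (hYc : ∀ x, ∫ ω, Y x ω ∂μ = 0)
    (k : D → D → ℝ) (hkcont : Continuous fun q : D × D => k q.1 q.2)
    (hk : ∀ x x', ∫ ω, Y x ω * Y x' ω ∂μ = k x x')
    (pts : (n : ℕ) → Fin (n + 1) → D)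
    (hδ : Tendsto (fun n => ⨆ q : D, ⨅ i : Fin (n + 1),
        dist (q : EuclideanSpace ℝ (Fin d)) (pts n i : EuclideanSpace ℝ (Fin d)))
      atTop (nhds 0))
    -- x_n*(q) is a nearest design point to q
    (xstar : (n : ℕ) → D → D)
    (hxstar_mem : ∀ n q, ∃ i, xstar n q = pts n i)
    (hxstar_near : ∀ (n : ℕ) (q : D) (i : Fin (n + 1)),
      dist (q : EuclideanSpace ℝ (Fin d)) (xstar n q : EuclideanSpace ℝ (Fin d))
        ≤ dist (q : EuclideanSpace ℝ (Fin d)) (pts n i : EuclideanSpace ℝ (Fin d)))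
    (Mnn : (n : ℕ) → D → Ω → ℝ)
    (hMnn : ∀ n q ω, Mnn n q ω =
      if 0 < k (xstar n q) (xstar n q)
      then k q (xstar n q) / k (xstar n q) (xstar n q) * Y (xstar n q) ω
      else 0) :
    Tendsto (fun n => ⨆ q : D, ∫ ω, (Y q ω - Mnn n q ω) ^ 2 ∂μ) atTop (nhds 0) := by
  have hnD : Nonempty D := hDne.to_subtype
  -- general expansion of the quadratic error
  have hYm : ∀ (q t : D) (a : ℝ), ∫ ω, (Y q ω - a * Y t ω) ^ 2 ∂μ
      = k q q - 2 * a * k q t + a ^ 2 * k t t := by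
    intro q t a
    rw [aux_expand (hYL2 q) (hYL2 t) a, hk, hk, hk]
  set F : D → D → ℝ := fun q t => k q q - 2 * k q t + k t t with hF
  have hF_eq : ∀ q t, F q t = ∫ ω, (Y q ω - 1 * Y t ω) ^ 2 ∂μ := by
    intro q t; rw [hYm]; simp only [hF]; ring
  have hF0 : ∀ q t, 0 ≤ F q t := by
    intro q t; rw [hF_eq]; exact integral_nonneg fun ω => sq_nonneg _
  have hkqq : ∀ q : D, 0 ≤ k q q := by
    intro q; rw [← hk]; exact integral_nonneg fun ω => mul_self_nonneg _
  have hnn : ∀ q t : D, ∀ a : ℝ, 0 ≤ k q q - 2 * a * k q t + a ^ 2 * k t t := by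
    intro q t a
    rw [← hYm]; exact integral_nonneg fun ω => sq_nonneg _
  -- the error bound
  have hbound : ∀ n (q : D), (∫ ω, (Y q ω - Mnn n q ω) ^ 2 ∂μ) ≤ F q (xstar n q) := by
    intro n q
    set t := xstar n q with ht
    by_cases h : 0 < k t t
    · have : (∫ ω, (Y q ω - Mnn n q ω) ^ 2 ∂μ)
          = ∫ ω, (Y q ω - (k q t / k t t) * Y t ω) ^ 2 ∂μ := by
        congr 1; funext ω; rw [hMnn, ← ht, if_pos h]
      rw [this, hYm]
      have h1 : 2 * (k q t / k t t) * k q t = 2 * (k q t ^ 2) / k t t := by ring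
      have h2 : (k q t / k t t) ^ 2 * k t t = k q t ^ 2 / k t t := by
        field_simp
      have h3 : 2 * k q t - k t t ≤ k q t ^ 2 / k t t := by
        rw [le_div_iff₀ h]; nlinarith [sq_nonneg (k q t - k t t)]
      have h4 : 2 * (k q t ^ 2) / k t t = 2 * (k q t ^ 2 / k t t) := by ring
      rw [h1, h2, h4]
      simp only [hF]
      linarith
    · have hkt0 : k t t = 0 := le_antisymm (not_lt.mp h) (hkqq t)
      have hqt : k q t = 0 := by
        by_contra hne
        have h5 := hnn q t ((k q q + 1) / (2 * k q t))
        rw [hkt0, mul_zero, add_zero] at h5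
        have h6 : 2 * ((k q q + 1) / (2 * k q t)) * k q t = k q q + 1 := by
          field_simp
        rw [h6] at h5
        linarith
      have : (∫ ω, (Y q ω - Mnn n q ω) ^ 2 ∂μ)
          = ∫ ω, (Y q ω - (0 : ℝ) * Y t ω) ^ 2 ∂μ := by
        congr 1; funext ω; rw [hMnn, ← ht, if_neg h]; ring_nf
      rw [this, hYm]
      simp only [hF, hkt0, hqt]
      ring_nf
      exact le_refl _
  have he0 : ∀ n (q : D), 0 ≤ ∫ ω, (Y q ω - Mnn n q ω) ^ 2 ∂μ := by
    intro n q; exact integral_nonneg fun ω => sq_nonneg _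
  -- uniform continuity of F
  have : CompactSpace D := isCompact_iff_compactSpace.mp hDc
  have hFcont : Continuous (fun p : D × D => F p.1 p.2) := by
    apply Continuous.add
    · apply Continuous.sub
      · exact hkcont.comp (continuous_fst.prodMk continuous_fst)
      · exact (continuous_const.mul hkcont)
    · exact hkcont.comp (continuous_snd.prodMk continuous_snd)
  have hUC : UniformContinuous (fun p : D × D => F p.1 p.2) :=
    CompactSpace.uniformContinuous_of_continuous hFcont
  rw [Metric.uniformContinuous_iff] at hUC
  -- bounded distances on D
  obtain ⟨C, hC⟩ := Metric.isBounded_iff.mp hDc.isBounded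
  have hBdd : ∀ n, BddAbove (Set.range fun q : D => ⨅ i : Fin (n + 1),
      dist (q : EuclideanSpace ℝ (Fin d)) (pts n i : EuclideanSpace ℝ (Fin d))) := by
    intro n
    refine ⟨C, ?_⟩
    rintro v ⟨q, rfl⟩
    exact le_trans (ciInf_le ⟨0, by rintro w ⟨i, rfl⟩; exact dist_nonneg⟩ 0)
      (hC q.2 (pts n 0).2)
  -- main convergence
  rw [Metric.tendsto_atTop]
  intro ε hε
  obtain ⟨δ, hδpos, hδimp⟩ := hUC (ε / 2) (by linarith)
  have hev : ∀ᶠ n in atTop, (⨆ q : D, ⨅ i : Fin (n + 1),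
      dist (q : EuclideanSpace ℝ (Fin d)) (pts n i : EuclideanSpace ℝ (Fin d))) < δ :=
    hδ.eventually_lt_const hδpos
  obtain ⟨N, hN⟩ := eventually_atTop.mp hev
  refine ⟨N, fun n hn => ?_⟩
  have hsup : ∀ q : D, ∫ ω, (Y q ω - Mnn n q ω) ^ 2 ∂μ ≤ ε / 2 := by
    intro q
    have hd1 : dist (q : EuclideanSpace ℝ (Fin d)) (xstar n q : EuclideanSpace ℝ (Fin d))
        < δ := by
      refine lt_of_le_of_lt (le_trans (le_ciInf fun i => hxstar_near n q i) ?_) (hN n hn)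
      exact le_ciSup (hBdd n) q
    have hdD : dist ((q, xstar n q) : D × D) ((q, q) : D × D) < δ := by
      rw [Prod.dist_eq]
      simp only [dist_self]
      rw [max_eq_right dist_nonneg, Subtype.dist_eq, dist_comm]
      exact hd1
    have := hδimp hdD
    have hFqq : F q q = 0 := by simp [hF]; ring
    rw [Real.dist_eq, hFqq, sub_zero, abs_of_nonneg (hF0 _ _)] at this
    exact le_trans (hbound n q) this.le
  have h1 : (⨆ q : D, ∫ ω, (Y q ω - Mnn n q ω) ^ 2 ∂μ) ≤ ε / 2 := ciSup_le hsup
  have h2 : (0 : ℝ) ≤ ⨆ q : D, ∫ ω, (Y q ω - Mnn n q ω) ^ 2 ∂μ :=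
    Real.iSup_nonneg (he0 n)
  rw [Real.dist_eq, sub_zero, abs_of_nonneg h2]
  linarith
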